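/- If the left class of the weak factorisation system on Set cofibrantly generated by the single map ∅ → {*} is closed under arbitrary coproducts, then the axiom of choice holds. -/
import Mathlib


universe u

/-- A map `f : A → B` of sets lies in the left class of the weak factorisation system on
`Set` cofibrantly generated by `∅ → {*}` precisely when it has the left lifting property
against every surjection (the right class being exactly the surjections). -/
def LlpAgainstSurjections {A B : Type u} (f : A → B) : Prop :=
  ∀ {C D : Type u} (p : C → D), Function.Surjective p →
    ∀ (top : A → C) (bot : B → D), p ∘ top = bot ∘ f →
      ∃ l : B → C, l ∘ f = top ∧ p ∘ l = bot

lemma llp_empty_to_unit : LlpAgainstSurjections (fun _ : PEmpty.{u+1} => PUnit.unit.{u+1}) := by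
  intro C D p hp top bot _
  obtain ⟨c, hc⟩ := hp (bot PUnit.unit)
  exact ⟨fun _ => c, funext fun x => x.elim, funext fun u => by cases u; exact hc⟩

/-- If the left class of the weak factorisation system on `Set`
cofibrantly generated by `∅ → {*}` is closed under arbitrary coproducts (i.e. a coproduct
of maps each having the left lifting property against all surjections again has that
lifting property), then the axiom of choice holds. -/
theorem axiomOfChoice_of_leftClass_closed_under_coproducts
    (H : ∀ {ι : Type u} (A B : ι → Type u) (f : ∀ i, A i → B i),
      (∀ i, LlpAgainstSurjections (f i)) →
      LlpAgainstSurjections (fun x : Sigma A => (⟨x.1, f x.1 x.2⟩ : Sigma B))) :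
    ∀ {α : Type u} (S : α → Type u), (∀ a, Nonempty (S a)) → Nonempty (∀ a, S a) := by
  intro α S hS
  have hsurj : Function.Surjective (Sigma.fst : (Σ a, S a) → α) := fun a =>
    (hS a).elim fun s => ⟨⟨a, s⟩, rfl⟩
  obtain ⟨l, -, hl⟩ := H (fun _ : α => PEmpty) (fun _ => PUnit)
    (fun _ => fun _ : PEmpty => PUnit.unit) (fun _ => llp_empty_to_unit) Sigma.fst hsurj (fun x => x.2.elim) (fun x => x.1)
    (funext fun x => x.2.elim)
  refine ⟨fun a => ?_⟩
  have h : (l ⟨a, PUnit.unit⟩).1 = a := congrFun hl ⟨a, PUnit.unit⟩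
  exact h ▸ (l ⟨a, PUnit.unit⟩).2
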